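/- Let x(λ) and x(η) denote the (unique) minimizers over X of x ↦ φ₁(x) + ⟨λ, Ax⟩ + c·d_X(x) and x ↦ φ₁(x) + ⟨η, Ax⟩ + c·d_X(x), respectively. Then c·σ_X·‖x(λ) − x(η)‖² ≤ ⟨η − λ, A x(λ) − A x(η)⟩. -/

import Mathlib

open scoped RealInnerProductSpace

/-- A convex differentiable function lies above its tangent: `f' (y - x) ≤ f y - f x`. -/
lemma convexOn_fderiv_le {E : Type*} [NormedAddCommGroup E] [NormedSpace ℝ E]
    (f : E → ℝ) (hf : ConvexOn ℝ Set.univ f) {f' : E →L[ℝ] ℝ} {x : E}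
    (hd : HasFDerivAt f f' x) (y : E) : f' (y - x) ≤ f y - f x := by
  set v := y - x with hv
  have hline : HasDerivAt (fun t : ℝ => x + t • v) v 0 := by
    simpa using ((hasDerivAt_id (0 : ℝ)).smul_const v).const_add x
  have hd' : HasFDerivAt f f' (x + (0:ℝ) • v) := by simpa using hd
  have hg : HasDerivAt (fun t : ℝ => f (x + t • v)) (f' v) 0 := by
    exact hd'.comp_hasDerivAt 0 hline
  have hslope : ∀ t : ℝ, t ∈ Set.Ioc (0 : ℝ) 1 →
      slope (fun t : ℝ => f (x + t • v)) 0 t ≤ f y - f x := by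
    intro t ht
    have ht0 : (0 : ℝ) < t := ht.1
    have hconv := hf.2 (Set.mem_univ x) (Set.mem_univ y)
      (show (0:ℝ) ≤ 1 - t by linarith [ht.2]) (le_of_lt ht0) (by ring)
    have hpt : x + t • v = (1 - t) • x + t • y := by
      simp only [hv]; module
    have h1 : f (x + t • v) ≤ (1 - t) * f x + t * f y := by
      rw [hpt]; simpa using hconv
    rw [slope_def_field]
    simp only [zero_smul, add_zero, sub_zero]
    rw [div_le_iff₀ ht0]
    nlinarith
  have htend : Filter.Tendsto (slope (fun t : ℝ => f (x + t • v)) 0)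
      (nhdsWithin 0 (Set.Ioi 0)) (nhds (f' v)) :=
    (hasDerivAt_iff_tendsto_slope.mp hg).mono_left
      (nhdsWithin_mono _ (fun t ht => ne_of_gt ht))
  refine le_of_tendsto htend ?_
  filter_upwards [Ioc_mem_nhdsGT_of_mem (by norm_num : (0:ℝ) ∈ Set.Ico (0:ℝ) 1)] with t ht
  exact hslope t ht

/-- strong monotonicity inequality for the minimizers. -/
theorem minimizers_monotonicity {n m : ℕ}
    (X : Set (EuclideanSpace ℝ (Fin m)))
    (hXne : X.Nonempty) (hXcomp : IsCompact X) (hXconv : Convex ℝ X)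
    (φ₁ : EuclideanSpace ℝ (Fin m) → ℝ)
    (hφ₁diff : ∀ x, DifferentiableAt ℝ φ₁ x) (hφ₁conv : ConvexOn ℝ Set.univ φ₁)
    (A : EuclideanSpace ℝ (Fin m) →L[ℝ] EuclideanSpace ℝ (Fin n))
    (dX : EuclideanSpace ℝ (Fin m) → ℝ) (hdXdiff : ∀ x, DifferentiableAt ℝ dX x)
    (σX : ℝ) (hσX : 0 < σX)
    (hdXmono : ∀ x ∈ X, ∀ y ∈ X,
      σX * ‖x - y‖ ^ 2 ≤ ⟪gradient dX x - gradient dX y, x - y⟫)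
    (c : ℝ) (hc : 0 < c)
    (lam eta : EuclideanSpace ℝ (Fin n))
    (xl xe : EuclideanSpace ℝ (Fin m)) (hxl : xl ∈ X) (hxe : xe ∈ X)
    (hxlmin : IsMinOn (fun x => φ₁ x + ⟪lam, A x⟫ + c * dX x) X xl)
    (hxemin : IsMinOn (fun x => φ₁ x + ⟪eta, A x⟫ + c * dX x) X xe) :
    c * σX * ‖xl - xe‖ ^ 2 ≤ ⟪eta - lam, A xl - A xe⟫ := by
  classical
  have hφd : ∀ z, HasFDerivAt φ₁ (fderiv ℝ φ₁ z) z := fun z => (hφ₁diff z).hasFDerivAt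
  have hdd : ∀ z, HasFDerivAt dX
      (InnerProductSpace.toDual ℝ _ (gradient dX z)) z := fun z =>
    hasGradientAt_iff_hasFDerivAt.mp (hdXdiff z).hasGradientAt
  have hFd : ∀ (μ : EuclideanSpace ℝ (Fin n)) (z : EuclideanSpace ℝ (Fin m)),
      HasFDerivAt (fun x => φ₁ x + ⟪μ, A x⟫ + c * dX x)
        (fderiv ℝ φ₁ z + (innerSL ℝ μ).comp A +
          c • (InnerProductSpace.toDual ℝ _ (gradient dX z))) z := by
    intro μ z
    have hlin : HasFDerivAt (fun x => ⟪μ, A x⟫) ((innerSL ℝ μ).comp A) z :=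
      ((innerSL ℝ μ).comp A).hasFDerivAt
    exact ((hφd z).add hlin).add ((hdd z).const_mul c)
  have hmem1 : xe - xl ∈ posTangentConeAt X xl :=
    sub_mem_posTangentConeAt_of_segment_subset (hXconv.segment_subset hxl hxe)
  have hmem2 : xl - xe ∈ posTangentConeAt X xe :=
    sub_mem_posTangentConeAt_of_segment_subset (hXconv.segment_subset hxe hxl)
  have h1 := hxlmin.localize.hasFDerivWithinAt_nonneg
    ((hFd lam xl).hasFDerivWithinAt) hmem1
  have h2 := hxemin.localize.hasFDerivWithinAt_nonneg
    ((hFd eta xe).hasFDerivWithinAt) hmem2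
  simp only [ContinuousLinearMap.add_apply, ContinuousLinearMap.coe_smul',
    Pi.smul_apply, ContinuousLinearMap.comp_apply, innerSL_apply_apply,
    InnerProductSpace.toDual_apply_apply, smul_eq_mul] at h1 h2
  have hc1 := convexOn_fderiv_le φ₁ hφ₁conv (hφd xl) xe
  have hc2 := convexOn_fderiv_le φ₁ hφ₁conv (hφd xe) xl
  have hq := hdXmono xl hxl xe hxe
  have hid1 : ⟪gradient dX xl, xe - xl⟫ + ⟪gradient dX xe, xl - xe⟫
      = -⟪gradient dX xl - gradient dX xe, xl - xe⟫ := by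
    simp only [inner_sub_left, inner_sub_right]; ring
  have hid2 : ⟪lam, A (xe - xl)⟫ + ⟪eta, A (xl - xe)⟫
      = ⟪eta - lam, A xl - A xe⟫ := by
    simp only [map_sub, inner_sub_left, inner_sub_right]; ring
  have hcq : c * (σX * ‖xl - xe‖ ^ 2) ≤ c * ⟪gradient dX xl - gradient dX xe, xl - xe⟫ :=
    mul_le_mul_of_nonneg_left hq hc.le
  nlinarith [h1, h2, hc1, hc2, hcq]
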